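/- Let a₀, b₀, a₁ be a V-path in which a₀ = S is a face sequence of type 3, and write a₁ = S′. Then either (i) S′ is of type 4 or 10 and the rightmost ∗ of S′ occupies the same position as the rightmost ∗ of S, or (ii) S′ is of type 1, 4, 6 or 10 and S′ has a 0 at the position of the rightmost ∗ of S. -/
import Mathlib


set_option linter.unusedVariables false

/-- The alphabet `{0, 1, ∗}` for face sequences. -/
inductive Letter : Type
  | zero
  | one
  | star
  deriving DecidableEq

/-- A sequence of length `n` over the alphabet `{0, 1, ∗}`. -/
abbrev FSeq (n : ℕ) := Fin n → Letter

/-- `S(1)`, the number of `1`'s in `S`. -/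
def count1 {n : ℕ} (S : FSeq n) : ℕ := (Finset.univ.filter fun i => S i = Letter.one).card

/-- `S(0)`, the number of `0`'s in `S`. -/
def count0 {n : ℕ} (S : FSeq n) : ℕ := (Finset.univ.filter fun i => S i = Letter.zero).card

/-- The number of `∗`'s in `S`. -/
def countStar {n : ℕ} (S : FSeq n) : ℕ := (Finset.univ.filter fun i => S i = Letter.star).card

/-- A face sequence: either no `∗` and exactly `k` ones, or at most `k-1` ones and
(#ones) + (#stars) ≥ `k+1`. -/
def FaceSeq {n : ℕ} (k : ℕ) (S : FSeq n) : Prop :=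
  (countStar S = 0 ∧ count1 S = k) ∨ (count1 S + 1 ≤ k ∧ k + 1 ≤ count1 S + countStar S)

/-- `v₀`, the sequence of `k` ones followed by `n - k` zeros. -/
def v0seq (n k : ℕ) : FSeq n := fun i => if (i : ℕ) < k then Letter.one else Letter.zero

/-- `S` contains at least one `∗`. -/
def hasStar {n : ℕ} (S : FSeq n) : Prop := ∃ i, S i = Letter.star

/-- There is a `1` to the right of the rightmost `∗` (in particular `S` contains a `∗`). -/
def OneRight {n : ℕ} (S : FSeq n) : Prop :=
  hasStar S ∧ ∃ i, S i = Letter.one ∧ ∀ j, i < j → S j ≠ Letter.star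

/-- There is no `1` to the right of the rightmost `∗` (and `S` contains a `∗`). -/
def NoOneRight {n : ℕ} (S : FSeq n) : Prop :=
  hasStar S ∧ ∀ i, S i = Letter.one → ∃ j, i < j ∧ S j = Letter.star

/-- There is a `0` to the left of the leftmost `∗` (in particular `S` contains a `∗`). -/
def ZeroLeft {n : ℕ} (S : FSeq n) : Prop :=
  hasStar S ∧ ∃ i, S i = Letter.zero ∧ ∀ j, j < i → S j ≠ Letter.star

/-- There is no `0` to the left of the leftmost `∗` (and `S` contains a `∗`). -/
def NoZeroLeft {n : ℕ} (S : FSeq n) : Prop :=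
  hasStar S ∧ ∀ i, S i = Letter.zero → ∃ j, j < i ∧ S j = Letter.star

/-- `i` is the position of the rightmost `1` of `S`. -/
def IsRightmostOne {n : ℕ} (S : FSeq n) (i : Fin n) : Prop :=
  S i = Letter.one ∧ ∀ j, i < j → S j ≠ Letter.one

/-- `i` is the position of the rightmost `∗` of `S`. -/
def IsRightmostStar {n : ℕ} (S : FSeq n) (i : Fin n) : Prop :=
  S i = Letter.star ∧ ∀ j, i < j → S j ≠ Letter.star

/-- `i` is the position of the leftmost `0` of `S`. -/
def IsLeftmostZero {n : ℕ} (S : FSeq n) (i : Fin n) : Prop :=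
  S i = Letter.zero ∧ ∀ j, j < i → S j ≠ Letter.zero

/-- `i` is the position of the leftmost `∗` of `S`. -/
def IsLeftmostStar {n : ℕ} (S : FSeq n) (i : Fin n) : Prop :=
  S i = Letter.star ∧ ∀ j, j < i → S j ≠ Letter.star

/-- Condition of rule (1), subcondition (a). -/
def Cond1a {n : ℕ} (k m0 m1 : ℕ) (S : FSeq n) : Prop :=
  count1 S + 1 ≤ k ∧ OneRight S ∧ count1 S ≠ m1

/-- Condition of rule (1), subcondition (b). -/
def Cond1b {n : ℕ} (k m0 m1 : ℕ) (S : FSeq n) : Prop :=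
  count1 S + 1 ≤ k ∧ OneRight S ∧ count1 S = m1 ∧ m0 < count0 S

/-- Condition of rule (1), subcondition (c): no `0` to the left of the leftmost `∗`. -/
def Cond1c {n : ℕ} (k m0 m1 : ℕ) (S : FSeq n) : Prop :=
  count1 S + 1 ≤ k ∧ OneRight S ∧ count1 S = m1 ∧ count0 S = m0 ∧ NoZeroLeft S

/-- Condition of rule (2), subcondition (a): here `count1 S + 1 ≠ m1` encodes `S(1) ≠ m₁ - 1`. -/
def Cond2a {n : ℕ} (k m0 m1 : ℕ) (S : FSeq n) : Prop :=
  count1 S + 2 ≤ k ∧ NoOneRight S ∧ count1 S + 1 ≠ m1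

/-- Condition of rule (2), subcondition (b). -/
def Cond2b {n : ℕ} (k m0 m1 : ℕ) (S : FSeq n) : Prop :=
  count1 S + 2 ≤ k ∧ NoOneRight S ∧ count1 S + 1 = m1 ∧ m0 < count0 S

/-- Condition of rule (2), subcondition (c). -/
def Cond2c {n : ℕ} (k m0 m1 : ℕ) (S : FSeq n) : Prop :=
  count1 S + 2 ≤ k ∧ NoOneRight S ∧ count1 S + 1 = m1 ∧ count0 S = m0 ∧ NoZeroLeft S

/-- `S` is of type 1 (satisfies the condition of rule (1)). -/
def Type1 {n : ℕ} (k m0 m1 : ℕ) (S : FSeq n) : Prop :=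
  Cond1a k m0 m1 S ∨ Cond1b k m0 m1 S ∨ Cond1c k m0 m1 S

/-- `S` is of type 2 (satisfies the condition of rule (2)). -/
def Type2 {n : ℕ} (k m0 m1 : ℕ) (S : FSeq n) : Prop :=
  Cond2a k m0 m1 S ∨ Cond2b k m0 m1 S ∨ Cond2c k m0 m1 S

/-- `S` is of type 3: `S(1) = k-1`, `S(0) ≤ n-k-1`, no `1` right of the rightmost `∗`,
a `0` left of the leftmost `∗`. -/
def Type3 {n : ℕ} (k : ℕ) (S : FSeq n) : Prop :=
  count1 S + 1 = k ∧ count0 S + k + 1 ≤ n ∧ NoOneRight S ∧ ZeroLeft S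

/-- `S` is of type 4: `S(1) = k-1`, `S(0) ≤ n-k-2`, no `1` right of the rightmost `∗`,
no `0` left of the leftmost `∗`. -/
def Type4 {n : ℕ} (k : ℕ) (S : FSeq n) : Prop :=
  count1 S + 1 = k ∧ count0 S + k + 2 ≤ n ∧ NoOneRight S ∧ NoZeroLeft S

/-- `S` is of type 5: `S(1) = m₁`, `S(0) ≤ m₀`, a `1` right of the rightmost `∗`,
a `0` left of the leftmost `∗`. -/
def Type5 {n : ℕ} (m0 m1 : ℕ) (S : FSeq n) : Prop :=
  count1 S = m1 ∧ count0 S ≤ m0 ∧ OneRight S ∧ ZeroLeft S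

/-- `S` is of type 6: `S(1) = m₁`, `S(0) < m₀`, a `1` right of the rightmost `∗`,
no `0` left of the leftmost `∗`. -/
def Type6 {n : ℕ} (m0 m1 : ℕ) (S : FSeq n) : Prop :=
  count1 S = m1 ∧ count0 S < m0 ∧ OneRight S ∧ NoZeroLeft S

/-- `S` is of type 7: `S(1) = m₁-1`, `S(0) ≤ m₀`, no `1` right of the rightmost `∗`,
a `0` left of the leftmost `∗`. -/
def Type7 {n : ℕ} (m0 m1 : ℕ) (S : FSeq n) : Prop :=
  count1 S + 1 = m1 ∧ count0 S ≤ m0 ∧ NoOneRight S ∧ ZeroLeft S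

/-- `S` is of type 8: `S(1) = m₁-1`, `S(0) < m₀`, no `1` right of the rightmost `∗`,
no `0` left of the leftmost `∗`. -/
def Type8 {n : ℕ} (m0 m1 : ℕ) (S : FSeq n) : Prop :=
  count1 S + 1 = m1 ∧ count0 S < m0 ∧ NoOneRight S ∧ NoZeroLeft S

/-- `S` is of type 9: `S(1) = k`, `S(0) = n-k`, and `S ≠ v₀`. -/
def Type9 {n : ℕ} (k : ℕ) (S : FSeq n) : Prop :=
  count1 S = k ∧ count0 S + k = n ∧ S ≠ v0seq n k

/-- `S` is of type 10: `S(1) = k-1`, `S(0) = n-k-1`, no `1` right of the rightmost `∗`,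
no `0` left of the leftmost `∗`. -/
def Type10 {n : ℕ} (k : ℕ) (S : FSeq n) : Prop :=
  count1 S + 1 = k ∧ count0 S + k + 1 = n ∧ NoOneRight S ∧ NoZeroLeft S

/-- `S` is of type `i` for `1 ≤ i ≤ 10` (and of no type otherwise). -/
def OfType {n : ℕ} (k m0 m1 : ℕ) (i : ℕ) (S : FSeq n) : Prop :=
  match i with
  | 1 => Type1 k m0 m1 S
  | 2 => Type2 k m0 m1 S
  | 3 => Type3 k S
  | 4 => Type4 k S
  | 5 => Type5 m0 m1 S
  | 6 => Type6 m0 m1 S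
  | 7 => Type7 m0 m1 S
  | 8 => Type8 m0 m1 S
  | 9 => Type9 k S
  | 10 => Type10 k S
  | _ => False

/-- The replacement of rule (1): replace the rightmost `1` with `∗`. -/
def Apply1 {n : ℕ} (S S' : FSeq n) : Prop :=
  ∃ i, IsRightmostOne S i ∧ S' = Function.update S i Letter.star

/-- The replacement of rule (2): replace the rightmost `∗` with `1`. -/
def Apply2 {n : ℕ} (S S' : FSeq n) : Prop :=
  ∃ i, IsRightmostStar S i ∧ S' = Function.update S i Letter.one

/-- The replacement of rules (3), (5) and (7): replace the leftmost `0` with `∗`. -/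
def Apply3 {n : ℕ} (S S' : FSeq n) : Prop :=
  ∃ i, IsLeftmostZero S i ∧ S' = Function.update S i Letter.star

/-- The replacement of rules (4), (6) and (8): replace the leftmost `∗` with `0`. -/
def Apply4 {n : ℕ} (S S' : FSeq n) : Prop :=
  ∃ i, IsLeftmostStar S i ∧ S' = Function.update S i Letter.zero

/-- The replacement of rule (9): replace the leftmost `0` and the rightmost `1` each with `∗`. -/
def Apply9 {n : ℕ} (S S' : FSeq n) : Prop :=
  ∃ i j, IsLeftmostZero S i ∧ IsRightmostOne S j ∧
    S' = Function.update (Function.update S i Letter.star) j Letter.star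

/-- The replacement of rule (10): replace the leftmost `∗` with `0` and the other `∗` with `1`. -/
def Apply10 {n : ℕ} (S S' : FSeq n) : Prop :=
  ∃ i j, IsLeftmostStar S i ∧ IsRightmostStar S j ∧ i ≠ j ∧
    S' = Function.update (Function.update S i Letter.zero) j Letter.one

/-- The matching `V` on face sequences: a face sequence `S` of type 1, 3, 5, 7 or 9 is
matched with the result `S'` of applying the corresponding rule to it. -/
def Vmatch {n : ℕ} (k m0 m1 : ℕ) (S S' : FSeq n) : Prop :=
  FaceSeq k S ∧
    ((Type1 k m0 m1 S ∧ Apply1 S S') ∨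
     (Type3 k S ∧ Apply3 S S') ∨
     (Type5 m0 m1 S ∧ Apply3 S S') ∨
     (Type7 m0 m1 S ∧ Apply3 S S') ∨
     (Type9 k S ∧ Apply9 S S'))

/-- The vertex set of a face sequence `S`: the vertex sequences (0/1-sequences with
exactly `k` ones) agreeing with `S` wherever `S` is not `∗`. -/
def VertexSet {n : ℕ} (k : ℕ) (S : FSeq n) : Set (FSeq n) :=
  {v | (∀ i, v i ≠ Letter.star) ∧ count1 v = k ∧ ∀ i, S i ≠ Letter.star → v i = S i}

/-- The dimension of the face `F(S)`. -/
def fdim {n : ℕ} (S : FSeq n) : ℕ :=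
  if countStar S = 0 then 0 else countStar S - 1

/-- `T` is a codimension-1 face of `S`. -/
def Codim1 {n : ℕ} (k : ℕ) (T S : FSeq n) : Prop :=
  VertexSet k T ⊂ VertexSet k S ∧ fdim T + 1 = fdim S

/-- A (nontrivial) `V`-path `a₀, b₀, a₁, b₁, …, b_r, a_{r+1}` of face sequences. -/
structure VPath (n k m0 m1 r : ℕ) where
  a : Fin (r + 2) → FSeq n
  b : Fin (r + 1) → FSeq n
  face_a : ∀ i, FaceSeq k (a i)
  face_b : ∀ i, FaceSeq k (b i)
  mem : ∀ i : Fin (r + 1), Vmatch k m0 m1 (a i.castSucc) (b i)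
  codim_left : ∀ i : Fin (r + 1), Codim1 k (a i.castSucc) (b i)
  codim_right : ∀ i : Fin (r + 1), Codim1 k (a i.succ) (b i)
  step_ne : ∀ i : Fin (r + 1), a i.castSucc ≠ a i.succ

open Finset Letter

lemma letter_cases (a : Letter) : a = zero ∨ a = one ∨ a = star := by
  cases a <;> simp

lemma count_partition {n : ℕ} (S : FSeq n) : count0 S + count1 S + countStar S = n := by
  classical
  rw [count0, count1, countStar, card_filter, card_filter, card_filter,
    ← Finset.sum_add_distrib, ← Finset.sum_add_distrib]
  have : ∀ i : Fin n, (((if S i = zero then (1:ℕ) else 0) + if S i = one then 1 else 0) + if S i = Letter.star then 1 else 0) = 1 := by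
    intro i; cases S i <;> simp
  rw [Finset.sum_congr rfl fun i _ => this i]
  simp

lemma cnt_update {n : ℕ} (S : FSeq n) (p : Fin n) (d e : Letter) :
    (Finset.univ.filter fun i => Function.update S p d i = e).card
        + (if S p = e then 1 else 0)
      = (Finset.univ.filter fun i => S i = e).card + (if d = e then 1 else 0) := by
  classical
  rw [Finset.card_filter, Finset.card_filter]
  have h : (fun i => if Function.update S p d i = e then (1:ℕ) else 0)
      = Function.update (fun i => if S i = e then (1:ℕ) else 0) p (if d = e then 1 else 0) := by
    funext i
    by_cases hi : i = p
    · subst hi; simp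
    · simp [Function.update_of_ne hi]
  rw [h, Finset.sum_update_of_mem (mem_univ p),
    Finset.sum_eq_sum_sdiff_singleton_add (mem_univ p)
      (fun i => if S i = e then (1:ℕ) else 0)]
  omega
lemma exists_rightmost_star {n : ℕ} {S : FSeq n} (h : hasStar S) :
    ∃ t, IsRightmostStar S t := by
  classical
  obtain ⟨i, hi⟩ := h
  have hne : (Finset.univ.filter fun j => S j = star).Nonempty := ⟨i, by simp [hi]⟩
  refine ⟨(Finset.univ.filter fun j => S j = star).max' hne, ?_, ?_⟩
  · have := Finset.max'_mem _ hne
    simpa using this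
  · intro j hj hs
    have : j ≤ (Finset.univ.filter fun j => S j = star).max' hne :=
      Finset.le_max' _ j (by simp [hs])
    exact absurd hj (not_lt.mpr this)

lemma vA_mem {n k : ℕ} (T : FSeq n) (A : Finset (Fin n))
    (hA : ∀ i ∈ A, T i = star) (hcard : count1 T + A.card = k) :
    (fun i => if i ∈ A then one else if T i = star then zero else T i) ∈ VertexSet k T := by
  classical
  refine ⟨?_, ?_, ?_⟩
  · intro i
    by_cases h1 : i ∈ A
    · simp [h1]
    · by_cases h2 : T i = star <;> simp [h1, h2]
  · show (Finset.univ.filter fun i =>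
      (if i ∈ A then one else if T i = star then zero else T i) = one).card = k
    have he : (Finset.univ.filter fun i =>
        (if i ∈ A then one else if T i = star then zero else T i) = one)
        = A ∪ Finset.univ.filter (fun i => T i = one) := by
      ext i
      by_cases h1 : i ∈ A
      · simp [h1]
      · by_cases h2 : T i = star <;> simp [h1, h2]
    rw [he, Finset.card_union_of_disjoint]
    · rw [Nat.add_comm]; exact hcard
    · rw [Finset.disjoint_left]
      intro i hiA hione
      simp only [Finset.mem_filter] at hione
      rw [hA i hiA] at hione
      exact absurd hione.2 (by simp)
  · intro i hi
    have h1 : i ∉ A := fun h => hi (hA i h)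
    simp [h1, hi]

lemma exists_vertex {n k : ℕ} {T : FSeq n} (hT : FaceSeq k T) :
    ∃ v, v ∈ VertexSet k T := by
  classical
  rcases hT with ⟨h0, h1⟩ | ⟨h1, h2⟩
  · obtain ⟨A, hsub, hcard⟩ := Finset.exists_subset_card_eq
      (Nat.zero_le ((Finset.univ.filter fun i => T i = star)).card)
    exact ⟨_, vA_mem T A (fun i hi => by simpa using hsub hi) (by omega)⟩
  · obtain ⟨A, hsub, hcard⟩ := Finset.exists_subset_card_eq
      (show k - count1 T ≤ (Finset.univ.filter fun i => T i = Letter.star).card by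
        rw [show (Finset.univ.filter fun i => T i = Letter.star).card = countStar T from rfl]; omega)
    exact ⟨_, vA_mem T A (fun i hi => by simpa using hsub hi) (by omega)⟩

lemma exists_vertex_zero {n k : ℕ} {T : FSeq n} (hT : FaceSeq k T) {i : Fin n}
    (hi : T i = star) : ∃ v ∈ VertexSet k T, v i = zero := by
  classical
  have hstar : 1 ≤ countStar T := by
    rw [show countStar T = (Finset.univ.filter fun j => T j = star).card from rfl]
    exact Finset.card_pos.mpr ⟨i, by simp [hi]⟩
  have hface : count1 T + 1 ≤ k ∧ k + 1 ≤ count1 T + countStar T := by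
    rcases hT with ⟨h0, _⟩ | h; · omega
    · exact h
  obtain ⟨A, hsub, hcard⟩ := Finset.exists_subset_card_eq
      (show k - count1 T ≤ ((Finset.univ.filter fun j => T j = star).erase i).card by
        rw [Finset.card_erase_of_mem (by simp [hi])]
        rw [show (Finset.univ.filter fun j => T j = star).card = countStar T from rfl]
        omega)
  have hiA : i ∉ A := fun h => (Finset.mem_erase.mp (hsub h)).1 rfl
  refine ⟨_, vA_mem T A (fun j hj => by
    have := hsub hj; simp [Finset.mem_erase] at this; exact this.2) (by omega), ?_⟩
  simp [hiA, hi]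

lemma exists_vertex_one {n k : ℕ} {T : FSeq n} (hT : FaceSeq k T) {i : Fin n}
    (hi : T i = star) : ∃ v ∈ VertexSet k T, v i = one := by
  classical
  have hstar : 1 ≤ countStar T := by
    rw [show countStar T = (Finset.univ.filter fun j => T j = star).card from rfl]
    exact Finset.card_pos.mpr ⟨i, by simp [hi]⟩
  have hface : count1 T + 1 ≤ k ∧ k + 1 ≤ count1 T + countStar T := by
    rcases hT with ⟨h0, _⟩ | h; · omega
    · exact h
  obtain ⟨A', hsub, hcard⟩ := Finset.exists_subset_card_eq
      (show k - count1 T - 1 ≤ ((Finset.univ.filter fun j => T j = star).erase i).card by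
        rw [Finset.card_erase_of_mem (by simp [hi])]
        rw [show (Finset.univ.filter fun j => T j = star).card = countStar T from rfl]
        omega)
  have hiA : i ∉ A' := fun h => (Finset.mem_erase.mp (hsub h)).1 rfl
  refine ⟨_, vA_mem T (insert i A') (fun j hj => ?_) ?_, ?_⟩
  · rcases Finset.mem_insert.mp hj with h | h
    · rw [h]; exact hi
    · have := hsub h; simp [Finset.mem_erase] at this; exact this.2
  · rw [Finset.card_insert_of_notMem hiA]; omega
  · simp
lemma subset_star {n k : ℕ} {T B : FSeq n} (hT : FaceSeq k T)
    (hsub : VertexSet k T ⊆ VertexSet k B) :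
    ∀ i, T i = star → B i = star := by
  intro i hi
  by_contra hB
  obtain ⟨v0, hv0, h0⟩ := exists_vertex_zero hT hi
  obtain ⟨v1, hv1, h1⟩ := exists_vertex_one hT hi
  have e0 := (hsub hv0).2.2 i hB
  have e1 := (hsub hv1).2.2 i hB
  rw [h0] at e0; rw [h1] at e1
  rw [← e0] at e1
  exact absurd e1 (by simp)

lemma subset_agree {n k : ℕ} {T B : FSeq n} (hT : FaceSeq k T)
    (hsub : VertexSet k T ⊆ VertexSet k B) :
    ∀ i, T i ≠ star → B i ≠ star → T i = B i := by
  intro i hTi hBi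
  obtain ⟨v, hv⟩ := exists_vertex hT
  have e1 := hv.2.2 i hTi
  have e2 := (hsub hv).2.2 i hBi
  rw [← e1, e2]

/-- Main structure lemma: if `T` is a codim-1 face of `B` and `countStar B ≥ 3`, then
`T` is obtained from `B` by replacing one `∗` with a non-`∗` letter. -/
lemma codim1_structure {n k : ℕ} {T B : FSeq n} (hT : FaceSeq k T)
    (hcod : Codim1 k T B) (hB3 : 3 ≤ countStar B) :
    ∃ q, B q = star ∧ T q ≠ star ∧ T = Function.update B q (T q) := by
  classical
  obtain ⟨hss, hdim⟩ := hcod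
  have hsub := hss.1
  have hst := subset_star hT hsub
  have hsubF : (Finset.univ.filter fun i => T i = star) ⊆
      (Finset.univ.filter fun i => B i = star) := by
    intro i hi
    simp only [Finset.mem_filter, Finset.mem_univ, true_and] at hi ⊢
    exact hst i hi
  have hfB : fdim B = countStar B - 1 := by rw [fdim]; rw [if_neg (by omega)]
  have hTpos : countStar T ≠ 0 := by
    intro h
    rw [fdim, if_pos h] at hdim
    omega
  have hfT : fdim T = countStar T - 1 := by rw [fdim, if_neg hTpos]
  have hcards : countStar T + 1 = countStar B := by omega
  have hcardF : ((Finset.univ.filter fun i => B i = star) \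
      (Finset.univ.filter fun i => T i = star)).card = 1 := by
    rw [Finset.card_sdiff_of_subset hsubF]
    rw [show (Finset.univ.filter fun i => B i = star).card = countStar B from rfl,
      show (Finset.univ.filter fun i => T i = star).card = countStar T from rfl]
    omega
  obtain ⟨q, hq⟩ := Finset.card_eq_one.mp hcardF
  have hqmem : q ∈ (Finset.univ.filter fun i => B i = star) \
      (Finset.univ.filter fun i => T i = star) := by rw [hq]; simp
  simp only [Finset.mem_sdiff, Finset.mem_filter, Finset.mem_univ, true_and] at hqmem
  refine ⟨q, hqmem.1, hqmem.2, ?_⟩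
  funext i
  by_cases hiq : i = q
  · subst hiq; simp
  · rw [Function.update_of_ne hiq]
    by_cases hTi : T i = star
    · rw [hTi, hst i hTi]
    · by_cases hBi : B i = star
      · exfalso
        have : i ∈ (Finset.univ.filter fun j => B j = star) \
            (Finset.univ.filter fun j => T j = star) := by
          simp [hBi, hTi]
        rw [hq] at this
        exact hiq (Finset.mem_singleton.mp this)
      · exact subset_agree hT hsub i hTi hBi

lemma oneRight_noOneRight {n : ℕ} {S : FSeq n} (h1 : OneRight S) (h2 : NoOneRight S) :
    False := by
  obtain ⟨_, i, hone, hright⟩ := h1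
  obtain ⟨j, hj, hjs⟩ := h2.2 i hone
  exact hright j hj hjs
lemma count1_upd {n : ℕ} (S : FSeq n) (p : Fin n) (d : Letter) :
    count1 (Function.update S p d) + (if S p = one then 1 else 0)
      = count1 S + (if d = one then 1 else 0) := cnt_update S p d one

lemma count0_upd {n : ℕ} (S : FSeq n) (p : Fin n) (d : Letter) :
    count0 (Function.update S p d) + (if S p = zero then 1 else 0)
      = count0 S + (if d = zero then 1 else 0) := cnt_update S p d zero

lemma countStar_upd {n : ℕ} (S : FSeq n) (p : Fin n) (d : Letter) :
    countStar (Function.update S p d) + (if S p = star then 1 else 0)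
      = countStar S + (if d = star then 1 else 0) := cnt_update S p d star
/-- In a `V`-path `a₀, b₀, a₁` with `a₀` of type 3, either `a₁` is of
type 4 or 10 and the rightmost `∗` of `a₁` is at the same position as the rightmost `∗`
of `a₀`, or `a₁` is of type 1, 4, 6 or 10 and has a `0` at the position of the rightmost
`∗` of `a₀`. -/
theorem vpath_from_type3 (n k m0 m1 : ℕ) (hk1 : 1 ≤ k) (hk2 : k ≤ n - 1)
    (hm0 : m0 + k + 1 ≤ n) (hm1l : 1 ≤ m1) (hm1u : m1 + 1 ≤ k)
    (P : VPath n k m0 m1 0) (h0 : Type3 k (P.a 0)) :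
    ((Type4 k (P.a 1) ∨ Type10 k (P.a 1)) ∧
      ∃ i, IsRightmostStar (P.a 0) i ∧ IsRightmostStar (P.a 1) i) ∨
    ((Type1 k m0 m1 (P.a 1) ∨ Type4 k (P.a 1) ∨ Type6 m0 m1 (P.a 1) ∨ Type10 k (P.a 1)) ∧
      ∃ i, IsRightmostStar (P.a 0) i ∧ P.a 1 i = Letter.zero) := by
  classical
  have hm := P.mem 0
  have hcodR := P.codim_right 0
  have hne := P.step_ne 0
  have hfaceT := P.face_a 1
  have ecs : (0 : Fin 1).castSucc = (0 : Fin 2) := by decide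
  have esc : (0 : Fin 1).succ = (1 : Fin 2) := by decide
  rw [ecs] at hm
  rw [esc] at hcodR
  rw [ecs, esc] at hne
  obtain ⟨hfaceS, hbr⟩ := hm
  obtain ⟨hc1, hc0, hNOR, hZL⟩ := h0
  have hApply3 : Apply3 (P.a 0) (P.b 0) := by
    rcases hbr with ⟨h, _⟩ | ⟨_, h⟩ | ⟨h, _⟩ | ⟨h, _⟩ | ⟨h, _⟩
    · exfalso
      rcases h with ⟨_, hOR, _⟩ | ⟨_, hOR, _⟩ | ⟨_, hOR, _⟩ <;>
        exact oneRight_noOneRight hOR hNOR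
    · exact h
    · exact absurd h.2.2.1 (fun hOR => oneRight_noOneRight hOR hNOR)
    · exfalso; have := h.1; omega
    · exfalso; have := h.1; omega
  obtain ⟨p, hp, hBeq⟩ := hApply3
  set S := P.a 0 with hSdef
  set T := P.a 1 with hTdef
  set B := Function.update S p Letter.star with hBu
  rw [hBeq] at hcodR
  have hSp : S p = zero := hp.1
  obtain ⟨z, hz0, hzleft⟩ := hZL.2
  have hpz : p ≤ z := by
    by_contra h
    exact hp.2 z (lt_of_not_ge h) hz0
  have hP1 : ∀ j, j ≤ p → S j ≠ star := by
    intro j hj hstar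
    rcases eq_or_lt_of_le hj with h | h
    · rw [h, hSp] at hstar; exact absurd hstar (by simp)
    · exact hzleft j (lt_of_lt_of_le h hpz) hstar
  have hP2 : ∀ u, S u = star → p < u := by
    intro u hu
    by_contra h
    exact hP1 u (le_of_not_gt h) hu
  obtain ⟨t, htS, htR⟩ := exists_rightmost_star hNOR.1
  have hpt : p < t := hP2 t htS
  have hpart := count_partition S
  have hcsS : 2 ≤ countStar S := by omega
  -- facts about B
  have hBp : B p = Letter.star := by rw [hBu]; simp
  have hBi : ∀ i, i ≠ p → B i = S i := by
    intro i hi; rw [hBu]; exact Function.update_of_ne hi _ _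
  have hB1 : count1 B = count1 S := by
    have h := count1_upd S p Letter.star
    rw [hSp, ← hBu] at h; simpa using h
  have hB0 : count0 B + 1 = count0 S := by
    have h := count0_upd S p Letter.star
    rw [hSp, ← hBu] at h; simpa using h
  have hBs : countStar B = countStar S + 1 := by
    have h := countStar_upd S p Letter.star
    rw [hSp, ← hBu] at h; simpa using h
  -- structure of T
  obtain ⟨q, hqB, hqT, hTeq⟩ := codim1_structure hfaceT hcodR (by omega)
  have hTqz : T q = zero := by
    rcases letter_cases (T q) with h | h | h
    · exact h
    · exfalso
      rw [h] at hTeq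
      have h1 : count1 T = count1 B + 1 := by
        have hh := count1_upd B q Letter.one
        rw [hqB, ← hTeq] at hh; simpa using hh
      have h2 : countStar T + 1 = countStar B := by
        have hh := countStar_upd B q Letter.one
        rw [hqB, ← hTeq] at hh; simpa using hh
      rcases hfaceT with ⟨hh0, hh1⟩ | ⟨hh1, hh2⟩ <;> omega
    · exact absurd h hqT
  rw [hTqz] at hTeq
  have hqp : q ≠ p := by
    intro h
    apply hne
    subst h
    rw [hTeq, hBu, Function.update_idem, ← hSp, Function.update_eq_self]
  have hSq : S q = Letter.star := by rw [← hBi q hqp]; exact hqB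
  have hpq : p < q := hP2 q hSq
  -- facts about T
  have hTp : T p = Letter.star := by
    rw [hTeq, Function.update_of_ne (Ne.symm hqp)]; exact hBp
  have hTi : ∀ i, i ≠ p → i ≠ q → T i = S i := by
    intro i hip hiq
    rw [hTeq, Function.update_of_ne hiq]
    exact hBi i hip
  have hT1 : count1 T = count1 S := by
    have h := count1_upd B q Letter.zero
    rw [hqB, ← hTeq] at h; simp at h; omega
  have hT0 : count0 T = count0 S := by
    have h := count0_upd B q Letter.zero
    rw [hqB, ← hTeq] at h; simp at h; omega
  have hTs : countStar T = countStar S := by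
    have h := countStar_upd B q Letter.zero
    rw [hqB, ← hTeq] at h; simp at h; omega
  have hT1k : count1 T + 1 = k := by omega
  have hNZLT : NoZeroLeft T := by
    refine ⟨⟨p, hTp⟩, ?_⟩
    intro i hiz
    have hip : i ≠ p := by
      intro h; rw [h, hTp] at hiz; exact absurd hiz (by simp)
    by_cases hiq : i = q
    · exact ⟨p, by rw [hiq]; exact hpq, hTp⟩
    · have hSi : S i = zero := by rw [← hTi i hip hiq]; exact hiz
      have hpi : p < i := by
        rcases lt_or_ge p i with h | h
        · exact h
        · exact absurd hSi (hp.2 i (lt_of_le_of_ne h hip))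
      exact ⟨p, hpi, hTp⟩
  by_cases hqt : q = t
  · -- q = t : the rightmost star of S got replaced by 0
    subst hqt
    obtain ⟨t', ht'S, ht'R⟩ := exists_rightmost_star (⟨p, hTp⟩ : hasStar T)
    by_cases hEx : ∃ i, t' < i ∧ T i = one
    · obtain ⟨i, hti, hione⟩ := hEx
      have hORT : OneRight T :=
        ⟨⟨p, hTp⟩, i, hione, fun j hj hs => ht'R j (lt_trans hti hj) hs⟩
      refine Or.inr ⟨?_, q, ⟨htS, htR⟩, hTqz⟩
      by_cases hm : count1 T = m1
      · by_cases hcc : m0 < count0 T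
        · exact Or.inl (Or.inr (Or.inl ⟨by omega, hORT, hm, hcc⟩))
        · by_cases hc2 : count0 T = m0
          · exact Or.inl (Or.inr (Or.inr ⟨by omega, hORT, hm, hc2, hNZLT⟩))
          · exact Or.inr (Or.inr (Or.inl ⟨hm, by omega, hORT, hNZLT⟩))
      · exact Or.inl (Or.inl ⟨by omega, hORT, hm⟩)
    · push_neg at hEx
      have hNORT : NoOneRight T := by
        refine ⟨⟨p, hTp⟩, ?_⟩
        intro i hione
        have hit' : i ≠ t' := by
          intro h; rw [h, ht'S] at hione; exact absurd hione (by simp)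
        have : i < t' := by
          rcases lt_or_ge t' i with h | h
          · exact absurd hione (hEx i h)
          · exact lt_of_le_of_ne h hit'
        exact ⟨t', this, ht'S⟩
      refine Or.inr ⟨?_, q, ⟨htS, htR⟩, hTqz⟩
      by_cases he : count0 T + k + 1 = n
      · exact Or.inr (Or.inr (Or.inr ⟨hT1k, he, hNORT, hNZLT⟩))
      · exact Or.inr (Or.inl ⟨hT1k, by omega, hNORT, hNZLT⟩)
  · -- q ≠ t : the rightmost star position is unchanged
    have hqltt : q < t := by
      rcases lt_or_ge q t with h | h
      · exact h
      · exact absurd hSq (htR q (lt_of_le_of_ne h (Ne.symm hqt)))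
    have htp : t ≠ p := (ne_of_lt hpt).symm
    have hTt : T t = Letter.star := by rw [hTi t htp (Ne.symm hqt)]; exact htS
    have hRMT : IsRightmostStar T t := by
      refine ⟨hTt, ?_⟩
      intro j hj hs
      have hjq : j ≠ q := (ne_of_lt (lt_trans hqltt hj)).symm
      have hjp : j ≠ p := (ne_of_lt (lt_trans hpt hj)).symm
      rw [hTi j hjp hjq] at hs
      exact htR j hj hs
    have hNORT : NoOneRight T := by
      refine ⟨⟨t, hTt⟩, ?_⟩
      intro i hione
      have hip : i ≠ p := by
        intro h; rw [h, hTp] at hione; exact absurd hione (by simp)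
      have hiq : i ≠ q := by
        intro h; rw [h, hTqz] at hione; exact absurd hione (by simp)
      have hSi : S i = one := by rw [← hTi i hip hiq]; exact hione
      obtain ⟨j, hij, hjs⟩ := hNOR.2 i hSi
      by_cases hjq : j = q
      · exact ⟨t, lt_trans (hjq ▸ hij) hqltt, hTt⟩
      · have hjp : j ≠ p := (ne_of_lt (hP2 j hjs)).symm
        exact ⟨j, hij, by rw [hTi j hjp hjq]; exact hjs⟩
    refine Or.inl ⟨?_, t, ⟨htS, htR⟩, hRMT⟩
    by_cases he : count0 T + k + 1 = n
    · exact Or.inr ⟨hT1k, he, hNORT, hNZLT⟩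
    · exact Or.inl ⟨hT1k, by omega, hNORT, hNZLT⟩
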